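/- Let π be an odd prime of ℤ[i] and define the Gauss sum g(r, πˡ) = Σ_{x mod πˡ} (x/πˡ) ẽ(rx/πˡ), where ẽ(z) = exp(2πi(z/(2i) − z̄/(2i))). If πʰ ∥ k (i.e., h = ord_π(k)) and l ≥ h + 2, then g(k, πˡ) = 0. -/

import Mathlib

/-- The additive character ẽ(z) = exp(2πi(z/(2i) − z̄/(2i))) on ℂ. -/
noncomputable def etilde (z : ℂ) : ℂ :=
  Complex.exp (2 * Real.pi * Complex.I *
    (z / (2 * Complex.I) - (starRingEnd ℂ) z / (2 * Complex.I)))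

lemma etilde_eq (z : ℂ) : etilde z = Complex.exp (2 * Real.pi * Complex.I * z.im) := by
  unfold etilde
  congr 1
  rw [div_sub_div_same, Complex.sub_conj]
  field_simp
  push_cast
  ring

lemma etilde_add (z w : ℂ) : etilde (z + w) = etilde z * etilde w := by
  unfold etilde
  rw [← Complex.exp_add, map_add]
  congr 1
  ring

lemma etilde_gauss (g : GaussianInt) : etilde (GaussianInt.toComplex g) = 1 := by
  rw [etilde_eq]
  rw [← GaussianInt.intCast_im]
  push_cast
  rw [mul_comm]
  exact_mod_cast Complex.exp_int_mul_two_pi_mul_I g.im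

lemma im_div (w p : GaussianInt) (hp : p ≠ 0) :
    (GaussianInt.toComplex w / GaussianInt.toComplex p).im
      = ((w * star p).im : ℝ) / ((Zsqrtd.norm p : ℤ) : ℝ) := by
  have hps : GaussianInt.toComplex p * GaussianInt.toComplex (star p)
      = ((Zsqrtd.norm p : ℤ) : ℂ) := by
    rw [← GaussianInt.toComplex_mul, ← Zsqrtd.norm_eq_mul_conj]
    simp [GaussianInt.toComplex_def]
  have hsp0 : GaussianInt.toComplex (star p) ≠ 0 := by
    rw [Ne, GaussianInt.toComplex_eq_zero]
    simpa using hp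
  have hc : (((Zsqrtd.norm p : ℤ) : ℝ) : ℂ) = ((Zsqrtd.norm p : ℤ) : ℂ) := by
    push_cast; ring
  have key : GaussianInt.toComplex w / GaussianInt.toComplex p
      = GaussianInt.toComplex (w * star p) / (((Zsqrtd.norm p : ℤ) : ℝ) : ℂ) := by
    rw [hc, GaussianInt.toComplex_mul, ← hps, mul_comm (GaussianInt.toComplex w),
      mul_comm (GaussianInt.toComplex p), mul_div_mul_left _ _ hsp0]
  rw [key, Complex.div_ofReal_im, GaussianInt.intCast_im]

lemma exists_nonvanish (p k' : GaussianInt) (hp : Prime p) (hk : ¬ p ∣ k') :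
    ∃ s : GaussianInt, etilde (GaussianInt.toComplex (k' * s) / GaussianInt.toComplex p) ≠ 1 := by
  by_contra hcon
  push_neg at hcon
  have hp0 : p ≠ 0 := hp.ne_zero
  have hN0 : Zsqrtd.norm p ≠ 0 := fun hh => hp0 (GaussianInt.norm_eq_zero.mp hh)
  have key : ∀ s : GaussianInt, Zsqrtd.norm p ∣ (k' * s * star p).im := by
    intro s
    have h1 := hcon s
    rw [etilde_eq, Complex.exp_eq_one_iff] at h1
    obtain ⟨n, hn⟩ := h1
    have h2pi : (2 * (Real.pi : ℂ) * Complex.I) ≠ 0 := by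
      simp [Real.pi_ne_zero, Complex.I_ne_zero]
    have h2 : (((GaussianInt.toComplex (k' * s) / GaussianInt.toComplex p).im : ℝ) : ℂ)
        = ((n : ℝ) : ℂ) := by
      apply mul_left_cancel₀ h2pi
      rw [hn]
      push_cast
      ring
    have h3 : (GaussianInt.toComplex (k' * s) / GaussianInt.toComplex p).im = (n : ℝ) := by
      exact_mod_cast h2
    rw [im_div _ _ hp0] at h3
    rw [div_eq_iff (by exact_mod_cast hN0 : ((Zsqrtd.norm p : ℤ) : ℝ) ≠ 0)] at h3
    refine ⟨n, ?_⟩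
    have : (((k' * s * star p).im : ℤ) : ℝ) = ((Zsqrtd.norm p * n : ℤ) : ℝ) := by
      push_cast
      linarith [h3]
    exact_mod_cast this
  have k1 := key 1
  rw [mul_one] at k1
  have k2 := key ⟨0, 1⟩
  have k2' : Zsqrtd.norm p ∣ (k' * star p).re := by
    have : (k' * ⟨0, 1⟩ * star p).im = (k' * star p).re := by
      simp [Zsqrtd.ext_iff, Zsqrtd.re_mul, Zsqrtd.im_mul]
      ring
    rwa [this] at k2
  have hdvd : ((Zsqrtd.norm p : ℤ) : GaussianInt) ∣ k' * star p :=
    (Zsqrtd.intCast_dvd _ _).mpr ⟨k2', k1⟩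
  rw [Zsqrtd.norm_eq_mul_conj] at hdvd
  have hsp0 : star p ≠ 0 := by simpa using hp0
  exact hk ((mul_dvd_mul_iff_right hsp0).mp hdvd)

lemma q_congr (π' : GaussianInt) (hπ : Prime π') (hodd : IsCoprime π' (2 : GaussianInt))
    (q : GaussianInt → ℤ)
    (hq : ∀ a : GaussianInt,
      (π' ∣ a → q a = 0) ∧
      (¬ π' ∣ a → (q a = 1 ∨ q a = -1) ∧
        π' ∣ (a ^ (((Zsqrtd.norm π').natAbs - 1) / 2) - (q a : GaussianInt))))
    (x y : GaussianInt) (hxy : π' ∣ (x - y)) : q x = q y := by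
  by_cases hx : π' ∣ x
  · have hy : π' ∣ y := by
      have := dvd_sub hx hxy
      simpa using this
    rw [(hq x).1 hx, (hq y).1 hy]
  · have hy : ¬ π' ∣ y := by
      intro hy
      apply hx
      have := dvd_add hy hxy
      simpa using this
    obtain ⟨hx1, hx2⟩ := (hq x).2 hx
    obtain ⟨hy1, hy2⟩ := (hq y).2 hy
    set m := ((Zsqrtd.norm π').natAbs - 1) / 2 with hm
    have hpow : π' ∣ x ^ m - y ^ m := dvd_trans hxy (sub_dvd_pow_sub_pow x y m)
    have hd : π' ∣ ((q y : GaussianInt) - (q x : GaussianInt)) := by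
      have h5 : (q y : GaussianInt) - (q x : GaussianInt)
          = (x ^ m - (q x : GaussianInt)) - (x ^ m - y ^ m) - (y ^ m - (q y : GaussianInt)) := by
        ring
      rw [h5]
      exact dvd_sub (dvd_sub hx2 hpow) hy2
    have hn2 : ¬ π' ∣ (2 : GaussianInt) := fun h2 =>
      hπ.not_unit (hodd.isUnit_of_dvd' dvd_rfl h2)
    have hd' : π' ∣ (((q y - q x : ℤ)) : GaussianInt) := by push_cast; exact hd
    by_contra hne
    have hcase : (q y - q x : ℤ) = 2 ∨ (q y - q x : ℤ) = -2 := by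
      rcases hx1 with h1 | h1 <;> rcases hy1 with h2 | h2 <;> omega
    apply hn2
    rcases hcase with hc | hc
    · rw [hc] at hd'
      exact_mod_cast hd'
    · rw [hc] at hd'
      rw [show (((-2 : ℤ)) : GaussianInt) = -(2 : GaussianInt) by push_cast; ring, dvd_neg] at hd'
      exact hd'

theorem stmt_11 (π' : GaussianInt) (hπ : Prime π') (hodd : IsCoprime π' (2 : GaussianInt))
    (q : GaussianInt → ℤ)
    -- q is the quadratic residue symbol mod π', characterized by the Euler criterion
    (hq : ∀ a : GaussianInt,
      (π' ∣ a → q a = 0) ∧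
      (¬ π' ∣ a → (q a = 1 ∨ q a = -1) ∧
        π' ∣ (a ^ (((Zsqrtd.norm π').natAbs - 1) / 2) - (q a : GaussianInt))))
    (l h : ℕ) (k : GaussianInt)
    (hk : π' ^ h ∣ k ∧ ¬ π' ^ (h + 1) ∣ k)  -- h = ord_π'(k)
    (hl : h + 2 ≤ l)
    (S : Finset GaussianInt)
    (hS : ∀ y : GaussianInt, ∃! x, x ∈ S ∧ π' ^ l ∣ (y - x)) :
    ∑ x ∈ S, ((q x : ℂ)) ^ l *
        etilde (GaussianInt.toComplex (k * x) / GaussianInt.toComplex (π' ^ l)) = 0 := by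
  classical
  obtain ⟨hk1, hk2⟩ := hk
  obtain ⟨k', hkk⟩ := hk1
  have hπ0 : π' ≠ 0 := hπ.ne_zero
  have hπk' : ¬ π' ∣ k' := by
    rintro ⟨c, hc⟩
    exact hk2 ⟨c, by rw [hkk, hc, pow_succ]; ring⟩
  obtain ⟨s, hζ⟩ := exists_nonvanish π' k' hπ hπk'
  set ζ : ℂ := etilde (GaussianInt.toComplex (k' * s) / GaussianInt.toComplex π') with hζdef
  set t : GaussianInt := π' ^ (l - h - 1) * s with ht
  have hπt : π' ∣ t :=
    dvd_mul_of_dvd_left (dvd_pow_self π' (by omega : l - h - 1 ≠ 0)) s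
  have hkt : k * t * π' = π' ^ l * (k' * s) := by
    have hpw : π' ^ h * π' ^ (l - h - 1) * π' = π' ^ l := by
      rw [← pow_add, ← pow_succ]
      congr 1
      omega
    calc k * t * π' = (π' ^ h * π' ^ (l - h - 1) * π') * (k' * s) := by rw [hkk, ht]; ring
    _ = π' ^ l * (k' * s) := by rw [hpw]
  have hσ : ∀ x : GaussianInt, ∃ y, y ∈ S ∧ π' ^ l ∣ (x + t - y) := fun x => (hS (x + t)).exists
  choose σ hσS hσd using hσ
  have hτ : ∀ x : GaussianInt, ∃ y, y ∈ S ∧ π' ^ l ∣ (x - t - y) := fun x => (hS (x - t)).exists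
  choose τ hτS hτd using hτ
  set f : GaussianInt → ℂ := fun x => ((q x : ℂ)) ^ l *
      etilde (GaussianInt.toComplex (k * x) / GaussianInt.toComplex (π' ^ l)) with hf
  have hPl0 : GaussianInt.toComplex (π' ^ l) ≠ 0 := by
    rw [Ne, GaussianInt.toComplex_eq_zero]
    exact pow_ne_zero _ hπ0
  have hπC0 : GaussianInt.toComplex π' ≠ 0 := by
    rwa [Ne, GaussianInt.toComplex_eq_zero]
  -- the key pointwise identity
  have hstep : ∀ x ∈ S, f (σ x) = ζ * f x := by
    intro x hx
    obtain ⟨u, hu⟩ := hσd x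
    have hqeq : q (σ x) = q x := by
      apply q_congr π' hπ hodd q hq
      have h1 : σ x - x = t - π' ^ l * u := by linear_combination -hu
      rw [h1]
      exact dvd_sub hπt (dvd_mul_of_dvd_left (dvd_pow_self π' (by omega : l ≠ 0)) u)
    have hid : (k * σ x) * π' = (k' * s) * π' ^ l + (k * x) * π' - (k * u) * (π' ^ l * π') := by
      linear_combination (-(k * π')) * hu + hkt
    have hidC : GaussianInt.toComplex (k * σ x) * GaussianInt.toComplex π'
        = GaussianInt.toComplex (k' * s) * GaussianInt.toComplex (π' ^ l)
          + GaussianInt.toComplex (k * x) * GaussianInt.toComplex π'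
          - GaussianInt.toComplex (k * u)
            * (GaussianInt.toComplex (π' ^ l) * GaussianInt.toComplex π') := by
      have := congrArg GaussianInt.toComplex hid
      simpa only [map_mul, map_add, map_sub] using this
    have harg : GaussianInt.toComplex (k * σ x) / GaussianInt.toComplex (π' ^ l)
        = GaussianInt.toComplex (k' * s) / GaussianInt.toComplex π'
          + (GaussianInt.toComplex (k * x) / GaussianInt.toComplex (π' ^ l)
            + GaussianInt.toComplex (-(k * u))) := by
      rw [map_neg]
      have hD : GaussianInt.toComplex (π' ^ l) * GaussianInt.toComplex π' ≠ 0 :=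
        mul_ne_zero hPl0 hπC0
      have eA : GaussianInt.toComplex (k * σ x) * GaussianInt.toComplex π'
          / (GaussianInt.toComplex (π' ^ l) * GaussianInt.toComplex π')
          = GaussianInt.toComplex (k * σ x) / GaussianInt.toComplex (π' ^ l) :=
        mul_div_mul_right _ _ hπC0
      have eB : GaussianInt.toComplex (k * x) * GaussianInt.toComplex π'
          / (GaussianInt.toComplex (π' ^ l) * GaussianInt.toComplex π')
          = GaussianInt.toComplex (k * x) / GaussianInt.toComplex (π' ^ l) :=
        mul_div_mul_right _ _ hπC0
      have eC : GaussianInt.toComplex (k' * s) * GaussianInt.toComplex (π' ^ l)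
          / (GaussianInt.toComplex (π' ^ l) * GaussianInt.toComplex π')
          = GaussianInt.toComplex (k' * s) / GaussianInt.toComplex π' := by
        rw [mul_comm (GaussianInt.toComplex (π' ^ l)) (GaussianInt.toComplex π')]
        exact mul_div_mul_right _ _ hPl0
      have eE : (-(GaussianInt.toComplex (k * u))
            * (GaussianInt.toComplex (π' ^ l) * GaussianInt.toComplex π'))
          / (GaussianInt.toComplex (π' ^ l) * GaussianInt.toComplex π')
          = -(GaussianInt.toComplex (k * u)) :=
        mul_div_cancel_right₀ _ hD
      rw [← eA, ← eB, ← eC, ← eE, ← add_div, ← add_div]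
      congr 1
      linear_combination hidC
    show ((q (σ x) : ℂ)) ^ l * etilde (GaussianInt.toComplex (k * σ x)
        / GaussianInt.toComplex (π' ^ l)) = ζ * f x
    rw [hqeq, harg, etilde_add, etilde_add, etilde_gauss, mul_one, hf]
    ring
  have hτσ : ∀ x ∈ S, τ (σ x) = x := by
    intro x hx
    obtain ⟨y0, _, hu⟩ := hS (σ x - t)
    have e1 : x = y0 := hu x ⟨hx, by
      have := (dvd_neg).mpr (hσd x)
      have h2 : σ x - t - x = -(x + t - σ x) := by ring
      rwa [h2]⟩
    have e2 : τ (σ x) = y0 := hu (τ (σ x)) ⟨hτS _, hτd (σ x)⟩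
    rw [e2, e1]
  have hστ : ∀ x ∈ S, σ (τ x) = x := by
    intro x hx
    obtain ⟨y0, _, hu⟩ := hS (τ x + t)
    have e1 : x = y0 := hu x ⟨hx, by
      have := (dvd_neg).mpr (hτd x)
      have h2 : τ x + t - x = -(x - t - τ x) := by ring
      rwa [h2]⟩
    have e2 : σ (τ x) = y0 := hu (σ (τ x)) ⟨hσS _, hσd (τ x)⟩
    rw [e2, e1]
  have hsum : ∑ x ∈ S, f (σ x) = ∑ x ∈ S, f x :=
    Finset.sum_nbij' σ τ (fun a _ => hσS a) (fun a _ => hτS a) hτσ hστ (fun a _ => rfl)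
  have h1 : ∑ x ∈ S, f x = ζ * ∑ x ∈ S, f x := by
    rw [Finset.mul_sum]
    conv_lhs => rw [← hsum]
    exact Finset.sum_congr rfl hstep
  have h2 : (1 - ζ) * ∑ x ∈ S, f x = 0 := by
    rw [sub_mul, one_mul, sub_eq_zero]
    exact h1
  have h3 : (1 - ζ) ≠ 0 := sub_ne_zero_of_ne fun hh => hζ hh.symm
  have h4 : ∑ x ∈ S, f x = 0 := (mul_eq_zero.mp h2).resolve_left h3
  exact h4
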